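/- The double integral (1/(4π)) ∫_{κ=0}^{π/2} ∫_{ρ=π/2−κ}^{π/2} sin(κ+ρ)·sin(κ)·sin(ρ) / √(−4·cos(κ)·cos(ρ)·cos(κ+ρ)) dρ dκ equals 3√2/32. -/

import Mathlib

open Real MeasureTheory Set

noncomputable def gg (κ ψ : ℝ) : ℝ :=
  Real.sin κ * (Real.cos κ + Real.cos ψ) / (2 * Real.sqrt (2 * Real.cos κ * (Real.cos ψ - Real.cos κ)))

lemma sin_mul_sin (a b : ℝ) : Real.sin a * Real.sin b = (Real.cos (a - b) - Real.cos (a + b)) / 2 := by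
  rw [Real.cos_sub, Real.cos_add]; ring

lemma cos_mul_cos (a b : ℝ) : Real.cos a * Real.cos b = (Real.cos (a - b) + Real.cos (a + b)) / 2 := by
  rw [Real.cos_sub, Real.cos_add]; ring

lemma keyA1 (κ ψ : ℝ) :
    Real.sin (κ + (1/2 * ψ + (π - κ)/2)) * Real.sin κ * Real.sin (1/2 * ψ + (π - κ)/2) /
      Real.sqrt (-4 * Real.cos κ * Real.cos (1/2 * ψ + (π - κ)/2) * Real.cos (κ + (1/2 * ψ + (π - κ)/2)))
    = gg κ ψ := by
  have e1 : κ + (1/2 * ψ + (π - κ)/2) = (ψ + π + κ)/2 := by ring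
  have e2 : 1/2 * ψ + (π - κ)/2 = (ψ + π - κ)/2 := by ring
  rw [e1, e2]
  have hs : Real.sin ((ψ + π + κ)/2) * Real.sin ((ψ + π - κ)/2) = (Real.cos κ + Real.cos ψ) / 2 := by
    rw [sin_mul_sin, show (ψ + π + κ)/2 - (ψ + π - κ)/2 = κ by ring,
      show (ψ + π + κ)/2 + (ψ + π - κ)/2 = ψ + π by ring, Real.cos_add_pi]
    ring
  have hc : Real.cos ((ψ + π - κ)/2) * Real.cos ((ψ + π + κ)/2) = (Real.cos κ - Real.cos ψ) / 2 := by
    rw [cos_mul_cos, show (ψ + π - κ)/2 - (ψ + π + κ)/2 = -κ by ring,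
      show (ψ + π - κ)/2 + (ψ + π + κ)/2 = ψ + π by ring, Real.cos_add_pi, Real.cos_neg]
    ring
  have hnum : Real.sin ((ψ + π + κ)/2) * Real.sin κ * Real.sin ((ψ + π - κ)/2)
      = Real.sin κ * (Real.cos κ + Real.cos ψ) / 2 := by
    rw [mul_right_comm, hs]; ring
  have harg : -4 * Real.cos κ * Real.cos ((ψ + π - κ)/2) * Real.cos ((ψ + π + κ)/2)
      = 2 * Real.cos κ * (Real.cos ψ - Real.cos κ) := by
    rw [mul_assoc, hc]; ring
  rw [hnum, harg, gg, div_div]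

lemma stepA (κ : ℝ) :
    (∫ ρ in (π / 2 - κ)..(π / 2),
        Real.sin (κ + ρ) * Real.sin κ * Real.sin ρ /
          Real.sqrt (-4 * Real.cos κ * Real.cos ρ * Real.cos (κ + ρ)))
    = (1/2) * ∫ ψ in (-κ)..κ, gg κ ψ := by
  have h := intervalIntegral.smul_integral_comp_mul_add (a := -κ) (b := κ)
    (f := fun ρ => Real.sin (κ + ρ) * Real.sin κ * Real.sin ρ /
      Real.sqrt (-4 * Real.cos κ * Real.cos ρ * Real.cos (κ + ρ))) (1/2) ((π - κ)/2)
  rw [show (1/2 : ℝ) * -κ + (π - κ)/2 = π/2 - κ by ring,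
      show (1/2 : ℝ) * κ + (π - κ)/2 = π/2 by ring] at h
  rw [← h, smul_eq_mul]
  congr 1
  have : (fun ψ : ℝ => Real.sin (κ + (1/2 * ψ + (π - κ)/2)) * Real.sin κ * Real.sin (1/2 * ψ + (π - κ)/2) /
      Real.sqrt (-4 * Real.cos κ * Real.cos (1/2 * ψ + (π - κ)/2) * Real.cos (κ + (1/2 * ψ + (π - κ)/2))))
      = fun ψ => gg κ ψ := funext (keyA1 κ)
  rw [this]

noncomputable def GG (w κ : ℝ) : ℝ :=
  Real.sqrt 2 / 4 * (Real.sqrt (Real.cos κ * (w - Real.cos κ))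
    - 3 * w / 2 * Real.arcsin (2 * Real.cos κ / w - 1))

lemma GG_cont (w : ℝ) : Continuous (GG w) := by
  apply Continuous.mul continuous_const
  apply Continuous.sub
  · exact Real.continuous_sqrt.comp (Real.continuous_cos.mul (continuous_const.sub Real.continuous_cos))
  · exact continuous_const.mul (Real.continuous_arcsin.comp
      (((continuous_const.mul Real.continuous_cos).div_const w).sub continuous_const))

lemma GG_deriv {ψ κ : ℝ} (hψ : |ψ| < π/2) (h1 : |ψ| < κ) (h2 : κ < π/2) :
    HasDerivAt (GG (Real.cos ψ)) (gg κ ψ) κ := by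
  set w := Real.cos ψ with hw'
  have hκ0 : 0 < κ := lt_of_le_of_lt (abs_nonneg ψ) h1
  have hc0 : 0 < Real.cos κ := Real.cos_pos_of_mem_Ioo ⟨by linarith [Real.pi_pos], h2⟩
  have hw : 0 < w := Real.cos_pos_of_mem_Ioo (abs_lt.mp hψ)
  have hcw : Real.cos κ < w := by
    have := Real.cos_lt_cos_of_nonneg_of_le_pi (abs_nonneg ψ) (by linarith [Real.pi_pos]) h1
    rwa [Real.cos_abs] at this
  set c := Real.cos κ with hc'
  set q := c * (w - c) with hq'
  have hq : 0 < q := mul_pos hc0 (by linarith)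
  have hsq : 0 < Real.sqrt q := Real.sqrt_pos.mpr hq
  -- derivative of inner q
  have d1 : HasDerivAt (fun x => Real.cos x * (w - Real.cos x)) (Real.sin κ * (2 * c - w)) κ := by
    have := (Real.hasDerivAt_cos κ).mul ((hasDerivAt_const κ w).sub (Real.hasDerivAt_cos κ))
    exact this.congr_deriv (by simp only [Pi.sub_apply, hc']; ring)
  have d2 : HasDerivAt (fun x => Real.sqrt (Real.cos x * (w - Real.cos x)))
      (1 / (2 * Real.sqrt q) * (Real.sin κ * (2 * c - w))) κ :=
    (Real.hasDerivAt_sqrt hq.ne').comp κ d1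
  -- arcsin part
  have d3 : HasDerivAt (fun x => 2 * Real.cos x / w - 1) (2 * -Real.sin κ / w) κ := by
    exact (((Real.hasDerivAt_cos κ).const_mul 2).div_const w).sub_const 1
  set x := 2 * c / w - 1 with hx'
  have hx1 : x ≠ -1 := by
    have : 0 < 2 * c / w := by positivity
    intro h; rw [hx'] at h; nlinarith
  have hx2 : x ≠ 1 := by
    have : 2 * c / w < 2 := by rw [div_lt_iff₀ hw]; nlinarith
    intro h; rw [hx'] at h; nlinarith
  have d4 : HasDerivAt (fun y => Real.arcsin (2 * Real.cos y / w - 1))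
      (1 / Real.sqrt (1 - x ^ 2) * (2 * -Real.sin κ / w)) κ :=
    by have := (Real.hasDerivAt_arcsin hx1 hx2).comp κ d3; exact this
  have hsqx : Real.sqrt (1 - x ^ 2) = 2 * Real.sqrt q / w := by
    have e : 1 - x ^ 2 = (2 * Real.sqrt q / w) ^ 2 := by
      rw [div_pow, mul_pow, Real.sq_sqrt hq.le, hx', hq']
      field_simp
      ring
    rw [e, Real.sqrt_sq (by positivity)]
  have dG := (d2.sub (d4.const_mul (3 * w / 2))).const_mul (Real.sqrt 2 / 4)
  refine dG.congr_deriv ?_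
  rw [hsqx, gg]
  rw [show 2 * Real.cos κ * (Real.cos ψ - Real.cos κ) = 2 * q by rw [hq']; ring,
    Real.sqrt_mul (by norm_num : (0:ℝ) ≤ 2)]
  have h2q : Real.sqrt 2 * Real.sqrt 2 = 2 := Real.mul_self_sqrt (by norm_num)
  have hqq : Real.sqrt q * Real.sqrt q = q := Real.mul_self_sqrt hq.le
  field_simp
  ring_nf
  simp only [Real.sq_sqrt (show (0:ℝ) ≤ 2 by norm_num), Real.sq_sqrt hq.le]
  ring

lemma gg_nonneg {ψ κ : ℝ} (hψ : |ψ| < π/2) (h1 : |ψ| < κ) (h2 : κ < π/2) :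
    0 ≤ gg κ ψ := by
  have hκ0 : 0 < κ := lt_of_le_of_lt (abs_nonneg ψ) h1
  have hc0 : 0 < Real.cos κ := Real.cos_pos_of_mem_Ioo ⟨by linarith [Real.pi_pos], h2⟩
  have hw : 0 < Real.cos ψ := Real.cos_pos_of_mem_Ioo (abs_lt.mp hψ)
  have hsin : 0 ≤ Real.sin κ := Real.sin_nonneg_of_nonneg_of_le_pi hκ0.le (by linarith [Real.pi_pos])
  exact div_nonneg (mul_nonneg hsin (by linarith)) (by positivity)

lemma sliceC {ψ : ℝ} (hψ : |ψ| < π/2) :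
    IntegrableOn (fun κ => gg κ ψ) (Set.Ioo |ψ| (π/2)) volume ∧
      ∫ κ in Set.Ioo |ψ| (π/2), gg κ ψ = 3 * Real.sqrt 2 * π * Real.cos ψ / 8 := by
  have hw : 0 < Real.cos ψ := Real.cos_pos_of_mem_Ioo (abs_lt.mp hψ)
  have hderiv : ∀ κ ∈ Ioo |ψ| (π/2), HasDerivAt (GG (Real.cos ψ)) (gg κ ψ) κ :=
    fun κ hκ => GG_deriv hψ hκ.1 hκ.2
  have hpos : ∀ κ ∈ Ioo |ψ| (π/2), 0 ≤ gg κ ψ := fun κ hκ => gg_nonneg hψ hκ.1 hκ.2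
  have hint : IntegrableOn (fun κ => gg κ ψ) (Set.Ioc |ψ| (π/2)) volume :=
    intervalIntegral.integrableOn_deriv_of_nonneg (GG_cont (Real.cos ψ)).continuousOn hderiv hpos
  constructor
  · exact hint.mono_set Set.Ioo_subset_Ioc_self
  · have hab : |ψ| ≤ π/2 := hψ.le
    have hii : IntervalIntegrable (fun κ => gg κ ψ) volume |ψ| (π/2) := by
      rw [intervalIntegrable_iff_integrableOn_Ioc_of_le hab]; exact hint
    have := intervalIntegral.integral_eq_sub_of_hasDeriv_right_of_le hab
      (GG_cont (Real.cos ψ)).continuousOn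
      (fun κ hκ => (hderiv κ hκ).hasDerivWithinAt) hii
    rw [intervalIntegral.integral_of_le hab, integral_Ioc_eq_integral_Ioo] at this
    rw [this, GG, GG, Real.cos_pi_div_two, Real.cos_abs]
    rw [show (2:ℝ) * 0 / Real.cos ψ - 1 = -1 by rw [mul_zero, zero_div]; ring,
      show (2:ℝ) * Real.cos ψ / Real.cos ψ - 1 = 1 by rw [mul_div_assoc, div_self hw.ne']; ring,
      Real.arcsin_one, Real.arcsin_neg_one]
    rw [show (0:ℝ) * (Real.cos ψ - 0) = 0 by ring, show Real.cos ψ * (Real.cos ψ - Real.cos ψ) = 0 by ring,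
      Real.sqrt_zero]
    ring

def TT : Set (ℝ × ℝ) := {p | 0 < p.1 ∧ p.1 < π/2 ∧ -p.1 < p.2 ∧ p.2 < p.1}

noncomputable def HH : ℝ × ℝ → ℝ := TT.indicator (fun p => gg p.1 p.2)

lemma TT_meas : MeasurableSet TT := by
  have : IsOpen TT := by
    have h1 : IsOpen {p : ℝ × ℝ | 0 < p.1} := isOpen_lt continuous_const continuous_fst
    have h2 : IsOpen {p : ℝ × ℝ | p.1 < π/2} := isOpen_lt continuous_fst continuous_const
    have h3 : IsOpen {p : ℝ × ℝ | -p.1 < p.2} := isOpen_lt continuous_fst.neg continuous_snd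
    have h4 : IsOpen {p : ℝ × ℝ | p.2 < p.1} := isOpen_lt continuous_snd continuous_fst
    have : TT = {p : ℝ × ℝ | 0 < p.1} ∩ ({p : ℝ × ℝ | p.1 < π/2} ∩ ({p : ℝ × ℝ | -p.1 < p.2} ∩ {p : ℝ × ℝ | p.2 < p.1})) := by
      ext p; simp [TT, and_assoc]
    rw [this]
    exact h1.inter (h2.inter (h3.inter h4))
  exact this.measurableSet

lemma gg_uncurry_meas : Measurable (fun p : ℝ × ℝ => gg p.1 p.2) := by
  unfold gg
  apply Measurable.div
  · exact (Real.continuous_sin.comp continuous_fst |>.mul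
      ((Real.continuous_cos.comp continuous_fst).add (Real.continuous_cos.comp continuous_snd))).measurable
  · exact (continuous_const.mul (Real.continuous_sqrt.comp
      ((continuous_const.mul (Real.continuous_cos.comp continuous_fst)).mul
        ((Real.continuous_cos.comp continuous_snd).sub (Real.continuous_cos.comp continuous_fst))))).measurable

lemma HH_slice_kappa (ψ κ : ℝ) :
    HH (κ, ψ) = (Set.Ioo |ψ| (π/2)).indicator (fun κ => gg κ ψ) κ := by
  have hiff : (κ, ψ) ∈ TT ↔ κ ∈ Set.Ioo |ψ| (π/2) := by
    constructor
    · rintro ⟨h1, h2, h3, h4⟩; exact ⟨abs_lt.mpr ⟨by linarith, h4⟩, h2⟩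
    · rintro ⟨h1, h2⟩
      have := abs_lt.mp h1
      exact ⟨lt_of_le_of_lt (abs_nonneg ψ) h1, h2, by linarith [this.1], this.2⟩
  by_cases h : κ ∈ Set.Ioo |ψ| (π/2)
  · rw [Set.indicator_of_mem h, HH, Set.indicator_of_mem (hiff.mpr h)]
  · rw [Set.indicator_of_notMem h, HH, Set.indicator_of_notMem (fun hc => h (hiff.mp hc))]

lemma HH_slice_psi {κ : ℝ} (hκ : κ ∈ Set.Ioo 0 (π/2)) (ψ : ℝ) :
    HH (κ, ψ) = (Set.Ioo (-κ) κ).indicator (fun ψ => gg κ ψ) ψ := by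
  have hiff : (κ, ψ) ∈ TT ↔ ψ ∈ Set.Ioo (-κ) κ := by
    constructor
    · rintro ⟨h1, h2, h3, h4⟩; exact ⟨h3, h4⟩
    · rintro ⟨h1, h2⟩; exact ⟨hκ.1, hκ.2, h1, h2⟩
  by_cases h : ψ ∈ Set.Ioo (-κ) κ
  · rw [Set.indicator_of_mem h, HH, Set.indicator_of_mem (hiff.mpr h)]
  · rw [Set.indicator_of_notMem h, HH, Set.indicator_of_notMem (fun hc => h (hiff.mp hc))]

lemma HH_zero {κ : ℝ} (hκ : κ ∉ Set.Ioo 0 (π/2)) (ψ : ℝ) : HH (κ, ψ) = 0 := by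
  apply Set.indicator_of_notMem
  intro h
  exact hκ ⟨h.1, h.2.1⟩

lemma HH_nonneg (p : ℝ × ℝ) : 0 ≤ HH p := by
  apply Set.indicator_nonneg
  rintro ⟨κ, ψ⟩ ⟨h1, h2, h3, h4⟩
  have hψ : |ψ| < π/2 := lt_trans (abs_lt.mpr ⟨by linarith, h4⟩) h2
  exact gg_nonneg hψ (abs_lt.mpr ⟨by linarith, h4⟩) h2

lemma kappa_integral (ψ : ℝ) :
    (∫ κ : ℝ, HH (κ, ψ)) =
      (Set.Ioo (-(π/2)) (π/2)).indicator (fun ψ => 3 * Real.sqrt 2 * π * Real.cos ψ / 8) ψ := by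
  have e1 : (∫ κ : ℝ, HH (κ, ψ)) = ∫ κ in Set.Ioo |ψ| (π/2), gg κ ψ := by
    rw [← MeasureTheory.integral_indicator measurableSet_Ioo]
    congr 1
    funext κ
    exact HH_slice_kappa ψ κ
  by_cases hψ : |ψ| < π/2
  · rw [e1, (sliceC hψ).2]
    exact (Set.indicator_of_mem (Set.mem_Ioo.mpr (abs_lt.mp hψ))
      (fun ψ => 3 * Real.sqrt 2 * π * Real.cos ψ / 8)).symm
  · rw [e1, Set.Ioo_eq_empty (fun hc => hψ hc)]
    rw [Measure.restrict_empty, integral_zero_measure]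
    exact (Set.indicator_of_notMem (fun hc => hψ (abs_lt.mpr (Set.mem_Ioo.mp hc))) _).symm

lemma HH_integrable : Integrable HH ((volume : Measure ℝ).prod volume) := by
  have hmeas : AEStronglyMeasurable HH ((volume : Measure ℝ).prod volume) :=
    (gg_uncurry_meas.indicator TT_meas).aestronglyMeasurable
  rw [MeasureTheory.integrable_prod_iff' hmeas]
  constructor
  · apply Filter.Eventually.of_forall
    intro ψ
    have : (fun κ => HH (κ, ψ)) = (Set.Ioo |ψ| (π/2)).indicator (fun κ => gg κ ψ) :=
      funext (HH_slice_kappa ψ)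
    rw [this]
    by_cases hψ : |ψ| < π/2
    · exact ((sliceC hψ).1).integrable_indicator measurableSet_Ioo
    · rw [Set.Ioo_eq_empty (fun hc => hψ hc), Set.indicator_empty]
      exact integrable_zero _ _ _
  · have : (fun ψ => ∫ κ, ‖HH (κ, ψ)‖) =
        (Set.Ioo (-(π/2)) (π/2)).indicator (fun ψ => 3 * Real.sqrt 2 * π * Real.cos ψ / 8) := by
      funext ψ
      rw [show (fun κ => ‖HH (κ, ψ)‖) = fun κ => HH (κ, ψ) from
        funext fun κ => Real.norm_of_nonneg (HH_nonneg _)]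
      exact kappa_integral ψ
    rw [this]
    have hc : Continuous fun ψ : ℝ => 3 * Real.sqrt 2 * π * Real.cos ψ / 8 := by fun_prop
    exact ((hc.integrableOn_Icc (a := -(π/2)) (b := π/2)).mono_set
      Set.Ioo_subset_Icc_self).integrable_indicator measurableSet_Ioo

lemma B1 : (∫ κ in (0:ℝ)..(π/2), ∫ ψ in (-κ)..κ, gg κ ψ) = ∫ κ : ℝ, ∫ ψ : ℝ, HH (κ, ψ) := by
  have hle : (0:ℝ) ≤ π/2 := by positivity
  rw [intervalIntegral.integral_of_le hle, MeasureTheory.integral_Ioc_eq_integral_Ioo,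
    ← MeasureTheory.integral_indicator measurableSet_Ioo]
  congr 1
  funext κ
  by_cases hκ : κ ∈ Set.Ioo (0:ℝ) (π/2)
  · rw [Set.indicator_of_mem hκ]
    have hκκ : -κ ≤ κ := by linarith [hκ.1]
    rw [intervalIntegral.integral_of_le hκκ, MeasureTheory.integral_Ioc_eq_integral_Ioo,
      ← MeasureTheory.integral_indicator measurableSet_Ioo]
    congr 1
    funext ψ
    exact (HH_slice_psi hκ ψ).symm
  · rw [Set.indicator_of_notMem hκ]
    symm
    simp only [HH_zero hκ]
    exact integral_zero _ _

lemma Bswap : (∫ κ : ℝ, ∫ ψ : ℝ, HH (κ, ψ)) = ∫ ψ : ℝ, ∫ κ : ℝ, HH (κ, ψ) :=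
  MeasureTheory.integral_integral_swap HH_integrable

lemma Bval : (∫ ψ : ℝ, ∫ κ : ℝ, HH (κ, ψ)) = 3 * Real.sqrt 2 * π / 4 := by
  have e1 : (∫ ψ : ℝ, ∫ κ : ℝ, HH (κ, ψ))
      = ∫ ψ : ℝ, (Set.Ioo (-(π/2)) (π/2)).indicator (fun ψ => 3 * Real.sqrt 2 * π * Real.cos ψ / 8) ψ := by
    congr 1
    funext ψ
    exact kappa_integral ψ
  rw [e1, MeasureTheory.integral_indicator measurableSet_Ioo]
  have hle : -(π/2) ≤ π/2 := by linarith [Real.pi_pos]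
  rw [← MeasureTheory.integral_Ioc_eq_integral_Ioo, ← intervalIntegral.integral_of_le hle]
  have e2 : (fun ψ : ℝ => 3 * Real.sqrt 2 * π * Real.cos ψ / 8)
      = fun ψ : ℝ => (3 * Real.sqrt 2 * π / 8) * Real.cos ψ := by funext ψ; ring
  rw [e2, intervalIntegral.integral_const_mul, integral_cos, Real.sin_pi_div_two, Real.sin_neg,
    Real.sin_pi_div_two]
  ring

theorem perimeter_density_at_pi :
    (1 / (4 * π)) *
      (∫ κ in (0:ℝ)..(π / 2), ∫ ρ in (π / 2 - κ)..(π / 2),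
        Real.sin (κ + ρ) * Real.sin κ * Real.sin ρ /
          Real.sqrt (-4 * Real.cos κ * Real.cos ρ * Real.cos (κ + ρ)))
    = 3 * Real.sqrt 2 / 32 := by
  simp only [stepA]
  rw [intervalIntegral.integral_const_mul, B1, Bswap, Bval]
  have hπ : π ≠ 0 := Real.pi_ne_zero
  field_simp
  ring
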